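/- For integers a, b, c ≥ 3 with 1/a + 1/b + 1/c < 1/2, one has 1/a + 1/b + 1/c - 1/2 ≤ -1/1806, with equality attained at (a,b,c) = (3,7,43). -/
import Mathlib

lemma key_sorted (a b c : ℕ) (ha : 3 ≤ a) (hab : a ≤ b) (hbc : b ≤ c)
    (h : 2*(a*b+b*c+c*a) < a*b*c) : 903*(a*b+b*c+c*a) ≤ 451*(a*b*c) := by
  rcases le_or_gt 7 a with h7 | h7
  · have h1 : a*b ≤ b*c := Nat.mul_le_mul (hab.trans hbc) le_rfl |>.trans_eq (Nat.mul_comm c b)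
    have h2 : c*a ≤ b*c := by nlinarith
    have h3 : 7*(b*c) ≤ a*(b*c) := Nat.mul_le_mul_right _ h7
    nlinarith
  · interval_cases a
    · rcases le_or_gt 13 b with hB | hB
      · have h1 : 13*c ≤ b*c := Nat.mul_le_mul_right _ hB
        nlinarith
      · interval_cases b <;> omega
    · rcases le_or_gt 9 b with hB | hB
      · have h1 : 9*c ≤ b*c := Nat.mul_le_mul_right _ hB
        nlinarith
      · interval_cases b <;> omega
    · rcases le_or_gt 7 b with hB | hB
      · have h1 : 7*c ≤ b*c := Nat.mul_le_mul_right _ hB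
        nlinarith
      · interval_cases b <;> omega
    · rcases le_or_gt 7 b with hB | hB
      · have h1 : 7*c ≤ b*c := Nat.mul_le_mul_right _ hB
        nlinarith
      · interval_cases b <;> omega

lemma key_sym (a b c : ℕ) (ha : 3 ≤ a) (hb : 3 ≤ b) (hc : 3 ≤ c)
    (h : 2*(a*b+b*c+c*a) < a*b*c) : 903*(a*b+b*c+c*a) ≤ 451*(a*b*c) := by
  rcases le_total a b with h1 | h1 <;> rcases le_total b c with h2 | h2 <;>
    rcases le_total a c with h3 | h3
  · exact key_sorted a b c ha h1 h2 h
  · exact key_sorted a b c ha h1 h2 h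
  · have e1 : a*c+c*b+b*a = a*b+b*c+c*a := by ring
    have e2 : a*c*b = a*b*c := by ring
    have := key_sorted a c b ha h3 h2 (by rw [e1, e2]; exact h)
    rw [e1, e2] at this; exact this
  · have e1 : c*a+a*b+b*c = a*b+b*c+c*a := by ring
    have e2 : c*a*b = a*b*c := by ring
    have := key_sorted c a b hc h3 h1 (by rw [e1, e2]; exact h)
    rw [e1, e2] at this; exact this
  · have e1 : b*a+a*c+c*b = a*b+b*c+c*a := by ring
    have e2 : b*a*c = a*b*c := by ring
    have := key_sorted b a c hb h1 h3 (by rw [e1, e2]; exact h)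
    rw [e1, e2] at this; exact this
  · have e1 : b*c+c*a+a*b = a*b+b*c+c*a := by ring
    have e2 : b*c*a = a*b*c := by ring
    have := key_sorted b c a hb h2 h3 (by rw [e1, e2]; exact h)
    rw [e1, e2] at this; exact this
  · have e1 : c*b+b*a+a*c = a*b+b*c+c*a := by ring
    have e2 : c*b*a = a*b*c := by ring
    have := key_sorted c b a hc h2 h1 (by rw [e1, e2]; exact h)
    rw [e1, e2] at this; exact this
  · have e1 : c*b+b*a+a*c = a*b+b*c+c*a := by ring
    have e2 : c*b*a = a*b*c := by ring
    have := key_sorted c b a hc h2 h1 (by rw [e1, e2]; exact h)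
    rw [e1, e2] at this; exact this

/-- For integers `a, b, c ≥ 3` with `1/a + 1/b + 1/c < 1/2` one has
`1/a + 1/b + 1/c - 1/2 ≤ -1/1806`, and equality is attained at `(3,7,43)`. -/
theorem stmt9 :
    (∀ a b c : ℕ, 3 ≤ a → 3 ≤ b → 3 ≤ c →
      1 / (a : ℝ) + 1 / (b : ℝ) + 1 / (c : ℝ) < 1 / 2 →
      1 / (a : ℝ) + 1 / (b : ℝ) + 1 / (c : ℝ) - 1 / 2 ≤ -(1 / 1806)) ∧
    (1 / (3 : ℝ) + 1 / (7 : ℝ) + 1 / (43 : ℝ) - 1 / 2 = -(1 / 1806)) := by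
  constructor
  · intro a b c ha hb hc h
    have ha' : (0:ℝ) < a := by exact_mod_cast Nat.lt_of_lt_of_le (by norm_num) ha
    have hb' : (0:ℝ) < b := by exact_mod_cast Nat.lt_of_lt_of_le (by norm_num) hb
    have hc' : (0:ℝ) < c := by exact_mod_cast Nat.lt_of_lt_of_le (by norm_num) hc
    have hn : 2*(a*b+b*c+c*a) < a*b*c := by
      have hr : (2*(a*b+b*c+c*a):ℝ) < (a*b*c:ℝ) := by
        rw [div_add_div _ _ ha'.ne' hb'.ne',
          div_add_div _ _ (mul_pos ha' hb').ne' hc'.ne',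
          div_lt_div_iff₀ (by positivity) (by norm_num : (0:ℝ) < 2)] at h
        push_cast
        nlinarith [h]
      exact_mod_cast hr
    have hk : (903*(a*b+b*c+c*a):ℝ) ≤ 451*(a*b*c) := by
      exact_mod_cast key_sym a b c ha hb hc hn
    push_cast at hk
    rw [div_add_div _ _ ha'.ne' hb'.ne',
      div_add_div _ _ (mul_pos ha' hb').ne' hc'.ne', sub_le_iff_le_add,
      div_le_iff₀ (by positivity)]
    nlinarith [hk]
  · norm_num
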